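/- arXiv:2411.09058 — 2 statements merged into one kernel-verified Lean document; each statement's English description precedes it below -/
import Mathlib

section
/- Let d ≥ 1 be an integer and let α, β be real numbers with 0 < α, 0 < β, and α + β < d. Then for all x, y ∈ ℝ^d with x ≠ y, one has ∫_{ℝ^d} ‖x − z‖^{α−d} ‖z − y‖^{β−d} dz = k_{α,β,d} · ‖x − y‖^{α+β−d}. -/
open MeasureTheory Real

/-- The composition constant `k_{α,β,d}` for Riesz kernels. -/
noncomputable def kRiesz (α β : ℝ) (d : ℕ) : ℝ :=
  π ^ ((d : ℝ) / 2) *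
    (Real.Gamma (α / 2) * Real.Gamma (β / 2) * Real.Gamma (((d : ℝ) - α - β) / 2)) /
    (Real.Gamma (((d : ℝ) - α) / 2) * Real.Gamma (((d : ℝ) - β) / 2) * Real.Gamma ((α + β) / 2))

section RieszAuxSection

open Set ENNReal

set_option maxHeartbeats 1000000

namespace RieszAux


/-- Integrability of the Gamma-type integrand. -/
lemma integrableOn_rpow_mul_exp_neg_mul {a r : ℝ} (ha : 0 < a) (hr : 0 < r) :
    IntegrableOn (fun t : ℝ => t ^ (a - 1) * rexp (-(r * t))) (Ioi 0) := by
  have h1 : IntegrableOn (fun x : ℝ => rexp (-x) * x ^ (a - 1)) (Ioi 0) :=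
    Real.GammaIntegral_convergent ha
  have h2 : IntegrableOn (fun t : ℝ => rexp (-(r * t)) * (r * t) ^ (a - 1)) (Ioi 0) := by
    have := (integrableOn_Ioi_comp_mul_left_iff
      (fun x : ℝ => rexp (-x) * x ^ (a - 1)) 0 hr).2 (by simpa using h1)
    simpa using this
  have h3 : IntegrableOn (fun t : ℝ => ((r:ℝ) ^ (a-1))⁻¹ * (rexp (-(r * t)) * (r * t) ^ (a - 1))) (Ioi 0) :=
    h2.const_mul _
  apply h3.congr_fun ?_ measurableSet_Ioi
  intro t ht
  have ht0 : (0:ℝ) < t := ht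
  simp only []
  rw [Real.mul_rpow hr.le ht0.le, ← mul_assoc, mul_comm ((r:ℝ) ^ (a-1))⁻¹ (rexp (-(r*t))),
    mul_assoc, ← mul_assoc ((r:ℝ)^(a-1))⁻¹, inv_mul_cancel₀ (ne_of_gt (Real.rpow_pos_of_pos hr _)),
    one_mul, mul_comm]

/-- Gamma-type lintegral. -/
lemma lintegral_rpow_mul_exp_neg_mul {a r : ℝ} (ha : 0 < a) (hr : 0 < r) :
    ∫⁻ t in Ioi (0:ℝ), ENNReal.ofReal (t ^ (a - 1) * rexp (-(r * t)))
      = ENNReal.ofReal ((1 / r) ^ a * Real.Gamma a) := by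
  rw [← integral_rpow_mul_exp_neg_mul_Ioi ha hr,
    ofReal_integral_eq_lintegral_ofReal (integrableOn_rpow_mul_exp_neg_mul ha hr)]
  filter_upwards [ae_restrict_mem measurableSet_Ioi] with t ht
  exact mul_nonneg (Real.rpow_nonneg (le_of_lt ht) _) (Real.exp_nonneg _)

/-- Scaling for lintegrals over `Ioi 0`. -/
lemma lintegral_Ioi_comp_mul_left {t : ℝ} (ht : 0 < t) (f : ℝ → ℝ≥0∞) (hf : Measurable f) :
    ∫⁻ u in Ioi (0:ℝ), f u = ENNReal.ofReal t * ∫⁻ v in Ioi (0:ℝ), f (t * v) := by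
  have hg : Measurable fun v : ℝ => t * v := measurable_const_mul t
  have hmap : Measure.map (fun v : ℝ => t * v) (volume.restrict (Ioi 0))
      = (ENNReal.ofReal |t⁻¹|) • volume.restrict (Ioi (0:ℝ)) := by
    have hpre : (fun v : ℝ => t * v) ⁻¹' (Ioi 0) = Ioi 0 := by
      ext v; simp [mul_pos_iff_of_pos_left, ht]
    rw [← hpre, ← Measure.restrict_map hg measurableSet_Ioi,
      Real.map_volume_mul_left (ne_of_gt ht), hpre, Measure.restrict_smul]
  have : ∫⁻ v in Ioi (0:ℝ), f (t * v) = ENNReal.ofReal |t⁻¹| * ∫⁻ u in Ioi (0:ℝ), f u := by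
    rw [← lintegral_map hf hg, hmap, lintegral_smul_measure, smul_eq_mul]
  rw [this, ← mul_assoc, ← ENNReal.ofReal_mul ht.le, abs_of_pos (inv_pos.2 ht),
    mul_inv_cancel₀ (ne_of_gt ht), ENNReal.ofReal_one, one_mul]

lemma ennreal_cancel {c a b : ℝ≥0∞} (h0 : c ≠ 0) (ht : c ≠ ⊤) (h : c * a = c * b) : a = b := by
  have := congrArg (fun x => c⁻¹ * x) h
  simpa [← mul_assoc, ENNReal.inv_mul_cancel h0 ht] using this

/-- Beta integral on `(0,∞)`. -/
lemma lintegral_beta {p q : ℝ} (hp : 0 < p) (hq : 0 < q) :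
    ∫⁻ v in Ioi (0:ℝ), ENNReal.ofReal (v ^ (p - 1) * (1 + v) ^ (-(p + q)))
      = ENNReal.ofReal (Real.Gamma p * Real.Gamma q / Real.Gamma (p + q)) := by
  have hpq : 0 < p + q := by linarith
  have hG : 0 < Real.Gamma (p + q) := Real.Gamma_pos_of_pos hpq
  have hGp : 0 < Real.Gamma p := Real.Gamma_pos_of_pos hp
  apply ennreal_cancel (c := ENNReal.ofReal (Real.Gamma (p + q))) (by simp [hG]) ofReal_ne_top
  set F : ℝ → ℝ → ℝ≥0∞ := fun v s =>
    ENNReal.ofReal (v ^ (p - 1)) * ENNReal.ofReal (s ^ (p + q - 1) * rexp (-((1 + v) * s)))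
    with hFdef
  have hF : Measurable (Function.uncurry F) := by
    show Measurable ((fun w : ℝ × ℝ => ENNReal.ofReal (w.1 ^ (p - 1))) *
      (fun w : ℝ × ℝ => ENNReal.ofReal (w.2 ^ (p + q - 1) * rexp (-((1 + w.1) * w.2)))))
    apply Measurable.mul
    · exact (measurable_fst.pow_const _).ennreal_ofReal
    · apply Measurable.ennreal_ofReal
      apply Measurable.mul (measurable_snd.pow_const _)
      exact (((measurable_const.add measurable_fst).mul measurable_snd).neg).exp
  have step1 : ENNReal.ofReal (Real.Gamma (p + q)) * ∫⁻ v in Ioi (0:ℝ), ENNReal.ofReal (v ^ (p - 1) * (1 + v) ^ (-(p + q)))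
      = ∫⁻ v in Ioi (0:ℝ), ∫⁻ s in Ioi (0:ℝ), F v s := by
    rw [← lintegral_const_mul' _ _ ofReal_ne_top]
    apply setLIntegral_congr_fun measurableSet_Ioi
    intro v hv
    beta_reduce
    have hv0 : (0:ℝ) < v := hv
    have h1v : (0:ℝ) < 1 + v := by linarith
    have hrw : (1 + v : ℝ) ^ (-(p + q)) = (1 / (1 + v)) ^ (p + q) := by
      rw [one_div, Real.inv_rpow h1v.le, Real.rpow_neg h1v.le]
    rw [ENNReal.ofReal_mul (Real.rpow_nonneg hv0.le _), hrw, hFdef]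
    simp only []
    calc ENNReal.ofReal (Real.Gamma (p+q))
          * (ENNReal.ofReal (v^(p-1)) * ENNReal.ofReal ((1/(1+v))^(p+q)))
        = ENNReal.ofReal (v^(p-1)) * ENNReal.ofReal ((1/(1+v))^(p+q) * Real.Gamma (p+q)) := by
          rw [ENNReal.ofReal_mul (by positivity)]; ring
      _ = ENNReal.ofReal (v^(p-1)) * ∫⁻ s in Ioi (0:ℝ),
            ENNReal.ofReal (s^(p+q-1) * rexp (-((1+v)*s))) := by
          rw [lintegral_rpow_mul_exp_neg_mul hpq h1v]
      _ = ∫⁻ s in Ioi (0:ℝ), ENNReal.ofReal (v^(p-1))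
            * ENNReal.ofReal (s^(p+q-1) * rexp (-((1+v)*s))) := by
          rw [lintegral_const_mul' _ _ ofReal_ne_top]
  have step2 : ∫⁻ v in Ioi (0:ℝ), ∫⁻ s in Ioi (0:ℝ), F v s
      = ∫⁻ s in Ioi (0:ℝ), ∫⁻ v in Ioi (0:ℝ), F v s :=
    lintegral_lintegral_swap hF.aemeasurable
  have step3 : ∫⁻ s in Ioi (0:ℝ), ∫⁻ v in Ioi (0:ℝ), F v s
      = ENNReal.ofReal (Real.Gamma p * Real.Gamma q) := by
    have inner : ∀ s ∈ Ioi (0:ℝ), ∫⁻ v in Ioi (0:ℝ), F v s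
        = ENNReal.ofReal (Real.Gamma p) * ENNReal.ofReal (s ^ (q - 1) * rexp (-(1 * s))) := by
      intro s hs
      have hs0 : (0:ℝ) < s := hs
      have hptw : ∀ v ∈ Ioi (0:ℝ), F v s
          = ENNReal.ofReal (v ^ (p - 1) * rexp (-(s * v)))
            * ENNReal.ofReal (s ^ (p + q - 1) * rexp (-s)) := by
        intro v hv
        have hv0 : (0:ℝ) < v := hv
        rw [hFdef]
        simp only []
        rw [← ENNReal.ofReal_mul (Real.rpow_nonneg hv0.le _),
          ← ENNReal.ofReal_mul (by positivity)]
        congr 1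
        rw [show (-((1 + v) * s)) = -s + -(s * v) by ring, Real.exp_add]
        ring
      rw [setLIntegral_congr_fun measurableSet_Ioi hptw,
        lintegral_mul_const' _ _ ofReal_ne_top, lintegral_rpow_mul_exp_neg_mul hp hs0]
      rw [← ENNReal.ofReal_mul (by positivity), ← ENNReal.ofReal_mul (by positivity)]
      congr 1
      have h1 : (1 / s) ^ p = s ^ (-p) := by
        rw [one_div, Real.inv_rpow hs0.le, Real.rpow_neg hs0.le]
      rw [h1]
      have h2 : s ^ (-p) * s ^ (p + q - 1) = s ^ (q - 1) := by
        rw [← Real.rpow_add hs0]; ring_nf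
      calc s ^ (-p) * Real.Gamma p * (s ^ (p + q - 1) * rexp (-s))
          = Real.Gamma p * ((s ^ (-p) * s ^ (p + q - 1)) * rexp (-s)) := by ring
        _ = Real.Gamma p * (s ^ (q - 1) * rexp (-(1 * s))) := by rw [h2, one_mul]
    rw [setLIntegral_congr_fun measurableSet_Ioi inner,
      lintegral_const_mul' _ _ ofReal_ne_top, lintegral_rpow_mul_exp_neg_mul hq one_pos]
    rw [← ENNReal.ofReal_mul hGp.le]
    congr 1
    simp
  rw [step1, step2, step3, ← ENNReal.ofReal_mul hG.le]
  congr 1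
  field_simp

variable {d : ℕ}


local notation "E" => EuclideanSpace ℝ (Fin d)

lemma integrable_gaussian {b : ℝ} (hb : 0 < b) :
    Integrable (fun v : E => rexp (-b * ‖v‖ ^ 2)) := by
  have hc := GaussianFourier.integrable_cexp_neg_mul_sq_norm_add
    (b := (b : ℂ)) (by simpa using hb) 0 (0 : E)
  have := hc.norm
  apply this.congr
  filter_upwards with v
  rw [Complex.norm_exp]
  norm_num
  left
  rw [← Complex.ofReal_pow, Complex.ofReal_re]

lemma lintegral_gaussian_shift {b : ℝ} (hb : 0 < b) (m : E) :
    ∫⁻ z : E, ENNReal.ofReal (rexp (-b * ‖z - m‖ ^ 2))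
      = ENNReal.ofReal ((π / b) ^ ((d : ℝ) / 2)) := by
  have hshift : ∫⁻ z : E, ENNReal.ofReal (rexp (-b * ‖z - m‖ ^ 2))
      = ∫⁻ z : E, ENNReal.ofReal (rexp (-b * ‖z‖ ^ 2)) := by
    have := lintegral_add_right_eq_self
      (μ := (volume : Measure E)) (fun z : E => ENNReal.ofReal (rexp (-b * ‖z‖ ^ 2))) (-m)
    simpa [sub_eq_add_neg] using this
  rw [hshift, ← ofReal_integral_eq_lintegral_ofReal (integrable_gaussian hb)
    (Filter.Eventually.of_forall fun v => (Real.exp_nonneg _)),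
    GaussianFourier.integral_rexp_neg_mul_sq_norm hb, finrank_euclideanSpace_fin]

lemma complete_square (t u : ℝ) (ht : 0 < t) (hu : 0 < u) (x y z : E) :
    t * ‖x - z‖ ^ 2 + u * ‖z - y‖ ^ 2
      = (t + u) * ‖z - ((t / (t + u)) • x + (u / (t + u)) • y)‖ ^ 2
        + (t * u / (t + u)) * ‖x - y‖ ^ 2 := by
  have htu : (0:ℝ) < t + u := by linarith
  set v1 : E := x - z with hv1
  set v2 : E := z - y with hv2
  have hm : z - ((t / (t + u)) • x + (u / (t + u)) • y)
      = ((t + u)⁻¹ * u) • v2 - ((t + u)⁻¹ * t) • v1 := by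
    rw [hv1, hv2]
    match_scalars <;> (field_simp; try ring)
  have hxy : x - y = v1 + v2 := by rw [hv1, hv2]; abel
  rw [hm, hxy]
  have expand1 : ‖((t + u)⁻¹ * u) • v2 - ((t + u)⁻¹ * t) • v1‖ ^ 2
      = ((t+u)⁻¹ * u)^2 * ‖v2‖^2 - 2 * (((t+u)⁻¹ * u) * ((t+u)⁻¹ * t)) * (inner ℝ v2 v1 : ℝ)
        + ((t+u)⁻¹ * t)^2 * ‖v1‖^2 := by
    rw [norm_sub_sq_real, norm_smul, norm_smul, real_inner_smul_left, real_inner_smul_right,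
      Real.norm_eq_abs, Real.norm_eq_abs, mul_pow, mul_pow, sq_abs, sq_abs]
    ring
  have expand2 : ‖v1 + v2‖ ^ 2 = ‖v1‖^2 + 2 * (inner ℝ v1 v2 : ℝ) + ‖v2‖^2 :=
    norm_add_sq_real v1 v2
  rw [expand1, expand2, real_inner_comm v2 v1]
  field_simp
  ring

lemma one_div_sq_rpow {n : ℝ} (e : ℝ) (hn : 0 < n) : (1 / n ^ 2) ^ e = n ^ (-(2 * e)) := by
  have h1 : (1 / n ^ 2 : ℝ) = n ^ (-(2:ℝ)) := by
    rw [Real.rpow_neg hn.le, ← Real.rpow_natCast n 2]; norm_num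
  rw [h1, ← Real.rpow_mul hn.le]
  norm_num

lemma main_lintegral (hd : 1 ≤ d) {α β : ℝ}
    (hα : 0 < α) (hβ : 0 < β) (hαβ : α + β < d)
    (x y : E) (hxy : x ≠ y) :
    ∫⁻ z : E, ENNReal.ofReal (‖x - z‖ ^ (α - (d : ℝ)) * ‖z - y‖ ^ (β - (d : ℝ)))
      = ENNReal.ofReal (kRiesz α β d * ‖x - y‖ ^ (α + β - (d : ℝ))) := by
  have hd' : (1:ℝ) ≤ (d:ℝ) := by exact_mod_cast hd
  haveI : Nontrivial (EuclideanSpace ℝ (Fin d)) := by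
    have : 0 < Module.finrank ℝ (EuclideanSpace ℝ (Fin d)) := by
      simp only [finrank_euclideanSpace_fin]; omega
    exact Module.nontrivial_of_finrank_pos this
  set a : ℝ := ((d:ℝ) - α) / 2 with ha_def
  set b : ℝ := ((d:ℝ) - β) / 2 with hb_def
  set c : ℝ := ((d:ℝ) - α - β) / 2 with hc_def
  have ha : 0 < a := div_pos (by linarith) two_pos
  have hb : 0 < b := div_pos (by linarith) two_pos
  have hc : 0 < c := div_pos (by linarith) two_pos
  have hΓa : 0 < Real.Gamma a := Real.Gamma_pos_of_pos ha
  have hΓb : 0 < Real.Gamma b := Real.Gamma_pos_of_pos hb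
  have hΓab : 0 < Real.Gamma (α/2 + β/2) := Real.Gamma_pos_of_pos (by positivity)
  set r : ℝ := ‖x - y‖ with hr_def
  have hr : 0 < r := by rw [hr_def]; exact norm_sub_pos_iff.2 hxy
  set g : ℝ → E → ℝ≥0∞ :=
    fun t z => ENNReal.ofReal (t ^ (a - 1) * rexp (-(‖x - z‖ ^ 2 * t))) with hg_def
  set h : ℝ → E → ℝ≥0∞ :=
    fun u z => ENNReal.ofReal (u ^ (b - 1) * rexp (-(‖z - y‖ ^ 2 * u))) with hh_def
  set φ : ℝ → ℝ → ℝ := fun t u => t ^ (a - 1) * u ^ (b - 1) *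
    ((t + u) ^ (-((d:ℝ) / 2)) * rexp (-(t * u / (t + u) * r ^ 2))) with hφ_def
  set ψ : ℝ → ℝ → ℝ := fun v t => (v ^ (b - 1) * (1 + v) ^ (-((d:ℝ) / 2))) *
    (t ^ (c - 1) * rexp (-((r ^ 2 * v / (1 + v)) * t))) with hψ_def
  -- measurability
  have hgm : Measurable fun p : E × ℝ => g p.2 p.1 := by
    rw [hg_def]
    exact ((measurable_snd.pow measurable_const).mul
      ((((measurable_const.sub measurable_fst).norm.pow_const 2).mul
        measurable_snd).neg.exp)).ennreal_ofReal
  have hhm : Measurable fun p : E × ℝ => h p.2 p.1 := by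
    rw [hh_def]
    exact ((measurable_snd.pow measurable_const).mul
      ((((measurable_fst.sub measurable_const).norm.pow_const 2).mul
        measurable_snd).neg.exp)).ennreal_ofReal
  have hφm : Measurable fun p : ℝ × ℝ => ENNReal.ofReal (φ p.1 p.2) := by
    rw [hφ_def]
    exact (((measurable_fst.pow measurable_const).mul
      (measurable_snd.pow measurable_const)).mul
      (((measurable_fst.add measurable_snd).pow measurable_const).mul
        (((measurable_fst.mul measurable_snd).div
          (measurable_fst.add measurable_snd)).mul measurable_const).neg.exp)).ennreal_ofReal
  have hψm : Measurable fun p : ℝ × ℝ => ENNReal.ofReal (ψ p.2 p.1) := by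
    rw [hψ_def]
    exact (((measurable_snd.pow measurable_const).mul
      ((measurable_const.add measurable_snd).pow measurable_const)).mul
      ((measurable_fst.pow measurable_const).mul
        ((((measurable_const.mul measurable_snd).div
          (measurable_const.add measurable_snd)).mul measurable_fst).neg.exp))).ennreal_ofReal
  -- a.e. facts
  have hax : ∀ᵐ z : E ∂volume, z ≠ x := by
    have hset : {z : E | ¬ z ≠ x} = {x} := by ext z; simp
    rw [ae_iff, hset]; exact measure_singleton x
  have hay : ∀ᵐ z : E ∂volume, z ≠ y := by
    have hset : {z : E | ¬ z ≠ y} = {y} := by ext z; simp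
    rw [ae_iff, hset]; exact measure_singleton y
  -- Step 1 : Gamma representation
  have e1 : ENNReal.ofReal (Real.Gamma a) * ENNReal.ofReal (Real.Gamma b)
        * ∫⁻ z : E, ENNReal.ofReal (‖x - z‖ ^ (α - (d : ℝ)) * ‖z - y‖ ^ (β - (d : ℝ)))
      = ∫⁻ z : E, (∫⁻ t in Ioi (0:ℝ), g t z) * (∫⁻ u in Ioi (0:ℝ), h u z) := by
    rw [mul_assoc, ← lintegral_const_mul' _ _ ofReal_ne_top,
      ← lintegral_const_mul' _ _ ofReal_ne_top]
    apply lintegral_congr_ae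
    filter_upwards [hax, hay] with z hzx hzy
    have hn1 : 0 < ‖x - z‖ := norm_sub_pos_iff.2 (Ne.symm hzx)
    have hn2 : 0 < ‖z - y‖ := norm_sub_pos_iff.2 hzy
    have hgi : ∫⁻ t in Ioi (0:ℝ), g t z
        = ENNReal.ofReal ((1 / ‖x - z‖ ^ 2) ^ a * Real.Gamma a) := by
      rw [hg_def]
      exact lintegral_rpow_mul_exp_neg_mul ha (by positivity)
    have hhi : ∫⁻ u in Ioi (0:ℝ), h u z
        = ENNReal.ofReal ((1 / ‖z - y‖ ^ 2) ^ b * Real.Gamma b) := by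
      rw [hh_def]
      exact lintegral_rpow_mul_exp_neg_mul hb (by positivity)
    rw [hgi, hhi, ← ENNReal.ofReal_mul (by positivity),
      ← ENNReal.ofReal_mul hΓa.le, ← ENNReal.ofReal_mul (by positivity)]
    congr 1
    rw [one_div_sq_rpow a hn1, one_div_sq_rpow b hn2]
    have hea : -(2 * a) = α - (d:ℝ) := by rw [ha_def]; ring
    have heb : -(2 * b) = β - (d:ℝ) := by rw [hb_def]; ring
    rw [hea, heb]; ring
  -- Step 2 : Tonelli swaps
  have hCm : Measurable fun z : E => ∫⁻ u in Ioi (0:ℝ), h u z :=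
    Measurable.lintegral_prod_right (f := fun z u => h u z) hhm
  have e2 : (∫⁻ z : E, (∫⁻ t in Ioi (0:ℝ), g t z) * (∫⁻ u in Ioi (0:ℝ), h u z))
      = ∫⁻ t in Ioi (0:ℝ), ∫⁻ u in Ioi (0:ℝ), ∫⁻ z : E, g t z * h u z := by
    have hg_z : ∀ z : E, Measurable fun t => g t z := fun z =>
      hgm.comp (measurable_prodMk_left)
    calc (∫⁻ z : E, (∫⁻ t in Ioi (0:ℝ), g t z) * (∫⁻ u in Ioi (0:ℝ), h u z))
        = ∫⁻ z : E, ∫⁻ t in Ioi (0:ℝ), g t z * (∫⁻ u in Ioi (0:ℝ), h u z) :=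
          lintegral_congr fun z => (lintegral_mul_const _ (hg_z z)).symm
      _ = ∫⁻ t in Ioi (0:ℝ), ∫⁻ z : E, g t z * (∫⁻ u in Ioi (0:ℝ), h u z) :=
          lintegral_lintegral_swap
            ((hgm.mul (hCm.comp measurable_fst)).aemeasurable)
      _ = ∫⁻ t in Ioi (0:ℝ), ∫⁻ z : E, ∫⁻ u in Ioi (0:ℝ), g t z * h u z := by
          refine lintegral_congr fun t => lintegral_congr fun z => ?_
          exact (lintegral_const_mul' _ _ ofReal_ne_top).symm
      _ = ∫⁻ t in Ioi (0:ℝ), ∫⁻ u in Ioi (0:ℝ), ∫⁻ z : E, g t z * h u z := by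
          refine lintegral_congr fun t => ?_
          have hm : Measurable fun p : E × ℝ => g t p.1 * h p.2 p.1 :=
            ((hgm.comp measurable_prodMk_right).comp measurable_fst).mul hhm
          exact lintegral_lintegral_swap hm.aemeasurable
  -- Step 3 : Gaussian integration
  have e3 : ∀ t ∈ Ioi (0:ℝ), ∀ u ∈ Ioi (0:ℝ), (∫⁻ z : E, g t z * h u z)
      = ENNReal.ofReal (π ^ ((d:ℝ) / 2)) * ENNReal.ofReal (φ t u) := by
    intro t ht u hu
    have ht0 : (0:ℝ) < t := ht
    have hu0 : (0:ℝ) < u := hu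
    have htu : (0:ℝ) < t + u := by linarith
    set m : E := (t / (t + u)) • x + (u / (t + u)) • y with hm_def
    have hpt : ∀ z : E, g t z * h u z
        = ENNReal.ofReal (t ^ (a - 1) * u ^ (b - 1) * rexp (-(t * u / (t + u) * r ^ 2)))
          * ENNReal.ofReal (rexp (-(t + u) * ‖z - m‖ ^ 2)) := by
      intro z
      rw [hg_def, hh_def]
      simp only []
      rw [← ENNReal.ofReal_mul (by positivity), ← ENNReal.ofReal_mul (by positivity)]
      congr 1
      have hsq := complete_square t u ht0 hu0 x y z
      calc t ^ (a - 1) * rexp (-(‖x - z‖ ^ 2 * t)) * (u ^ (b - 1) * rexp (-(‖z - y‖ ^ 2 * u)))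
          = t ^ (a - 1) * u ^ (b - 1)
            * rexp (-(‖x - z‖ ^ 2 * t) + -(‖z - y‖ ^ 2 * u)) := by
            rw [Real.exp_add]; ring
        _ = t ^ (a - 1) * u ^ (b - 1)
            * rexp (-(t * u / (t + u) * r ^ 2) + -(t + u) * ‖z - m‖ ^ 2) := by
            congr 1
            rw [hr_def]
            rw [show -(‖x - z‖ ^ 2 * t) + -(‖z - y‖ ^ 2 * u)
              = -(t * ‖x - z‖ ^ 2 + u * ‖z - y‖ ^ 2) by ring, hsq, hm_def]
            ring
        _ = t ^ (a - 1) * u ^ (b - 1) * rexp (-(t * u / (t + u) * r ^ 2))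
            * rexp (-(t + u) * ‖z - m‖ ^ 2) := by
            rw [Real.exp_add]; ring
    rw [lintegral_congr hpt, lintegral_const_mul' _ _ ofReal_ne_top,
      lintegral_gaussian_shift htu m, ← ENNReal.ofReal_mul (by positivity),
      ← ENNReal.ofReal_mul (by positivity)]
    congr 1
    have hdiv : (π / (t + u)) ^ ((d:ℝ) / 2)
        = π ^ ((d:ℝ) / 2) * (t + u) ^ (-((d:ℝ) / 2)) := by
      rw [Real.div_rpow pi_pos.le htu.le, Real.rpow_neg htu.le, div_eq_mul_inv]
    rw [hdiv, hφ_def]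
    ring_nf
  -- Step 4 : substitution u = t * v
  have e4 : ∀ t ∈ Ioi (0:ℝ), (∫⁻ u in Ioi (0:ℝ), ENNReal.ofReal (φ t u))
      = ∫⁻ v in Ioi (0:ℝ), ENNReal.ofReal (ψ v t) := by
    intro t ht
    have ht0 : (0:ℝ) < t := ht
    have hφt : Measurable fun u : ℝ => ENNReal.ofReal (φ t u) :=
      hφm.comp measurable_prodMk_left
    rw [lintegral_Ioi_comp_mul_left ht0 _ hφt, ← lintegral_const_mul' _ _ ofReal_ne_top]
    apply setLIntegral_congr_fun measurableSet_Ioi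
    intro v hv
    beta_reduce
    have hv0 : (0:ℝ) < v := hv
    have h1v : (0:ℝ) < 1 + v := by linarith
    rw [← ENNReal.ofReal_mul ht0.le]
    congr 1
    rw [hφ_def, hψ_def]
    simp only []
    have h1 : (t * v) ^ (b - 1) = t ^ (b - 1) * v ^ (b - 1) :=
      Real.mul_rpow ht0.le hv0.le
    have h2 : t + t * v = t * (1 + v) := by ring
    have h3 : (t * (1 + v)) ^ (-((d:ℝ) / 2))
        = t ^ (-((d:ℝ) / 2)) * (1 + v) ^ (-((d:ℝ) / 2)) :=
      Real.mul_rpow ht0.le h1v.le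
    have h4 : t * (t * v) / (t * (1 + v)) * r ^ 2 = r ^ 2 * v / (1 + v) * t := by
      field_simp
    have h5 : t * t ^ (a - 1) * t ^ (b - 1) * t ^ (-((d:ℝ) / 2)) = t ^ (c - 1) := by
      nth_rewrite 1 [← Real.rpow_one t]
      rw [← Real.rpow_add ht0, ← Real.rpow_add ht0, ← Real.rpow_add ht0]
      congr 1
      rw [ha_def, hb_def, hc_def]; ring
    rw [h1, h2, h3, h4]
    calc t * (t ^ (a - 1) * (t ^ (b - 1) * v ^ (b - 1))
          * (t ^ (-((d:ℝ) / 2)) * (1 + v) ^ (-((d:ℝ) / 2))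
            * rexp (-(r ^ 2 * v / (1 + v) * t))))
        = v ^ (b - 1) * (1 + v) ^ (-((d:ℝ) / 2))
          * ((t * t ^ (a - 1) * t ^ (b - 1) * t ^ (-((d:ℝ) / 2)))
            * rexp (-(r ^ 2 * v / (1 + v) * t))) := by ring
      _ = v ^ (b - 1) * (1 + v) ^ (-((d:ℝ) / 2))
          * (t ^ (c - 1) * rexp (-(r ^ 2 * v / (1 + v) * t))) := by rw [h5]
  -- Step 6 : inner t-integral
  have e6 : ∀ v ∈ Ioi (0:ℝ), (∫⁻ t in Ioi (0:ℝ), ENNReal.ofReal (ψ v t))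
      = ENNReal.ofReal ((r ^ 2) ^ (-c) * Real.Gamma c)
        * ENNReal.ofReal (v ^ (α / 2 - 1) * (1 + v) ^ (-(α / 2 + β / 2))) := by
    intro v hv
    have hv0 : (0:ℝ) < v := hv
    have h1v : (0:ℝ) < 1 + v := by linarith
    have hrv : (0:ℝ) < r ^ 2 * v / (1 + v) := by positivity
    have hpt : ∀ t : ℝ, ENNReal.ofReal (ψ v t)
        = ENNReal.ofReal (v ^ (b - 1) * (1 + v) ^ (-((d:ℝ) / 2)))
          * ENNReal.ofReal (t ^ (c - 1) * rexp (-(r ^ 2 * v / (1 + v) * t))) := by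
      intro t
      rw [hψ_def]
      simp only []
      rw [← ENNReal.ofReal_mul (by positivity)]
    rw [lintegral_congr hpt, lintegral_const_mul' _ _ ofReal_ne_top,
      lintegral_rpow_mul_exp_neg_mul hc hrv,
      ← ENNReal.ofReal_mul (by positivity), ← ENNReal.ofReal_mul (by positivity)]
    congr 1
    have hA : (1 / (r ^ 2 * v / (1 + v))) ^ c
        = (r ^ 2) ^ (-c) * v ^ (-c) * (1 + v) ^ c := by
      have hh : (1 / (r ^ 2 * v / (1 + v)) : ℝ) = (r ^ 2)⁻¹ * v⁻¹ * (1 + v) := by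
        field_simp
      rw [hh, Real.mul_rpow (by positivity) h1v.le,
        Real.mul_rpow (by positivity) (by positivity),
        Real.inv_rpow (by positivity), Real.inv_rpow hv0.le,
        ← Real.rpow_neg (by positivity), ← Real.rpow_neg hv0.le]
    have hB : v ^ (b - 1) * v ^ (-c) = v ^ (α / 2 - 1) := by
      rw [← Real.rpow_add hv0]
      congr 1
      rw [hb_def, hc_def]; ring
    have hC : (1 + v) ^ (-((d:ℝ) / 2)) * (1 + v) ^ c = (1 + v) ^ (-(α / 2 + β / 2)) := by
      rw [← Real.rpow_add h1v]
      congr 1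
      rw [hc_def]; ring
    calc v ^ (b - 1) * (1 + v) ^ (-((d:ℝ) / 2)) * ((1 / (r ^ 2 * v / (1 + v))) ^ c * Real.Gamma c)
        = (r ^ 2) ^ (-c) * Real.Gamma c
          * ((v ^ (b - 1) * v ^ (-c)) * ((1 + v) ^ (-((d:ℝ) / 2)) * (1 + v) ^ c)) := by
          rw [hA]; ring
      _ = (r ^ 2) ^ (-c) * Real.Gamma c * (v ^ (α / 2 - 1) * (1 + v) ^ (-(α / 2 + β / 2))) := by
          rw [hB, hC]
  -- Final assembly
  have final : ENNReal.ofReal (Real.Gamma a) * ENNReal.ofReal (Real.Gamma b)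
      * ∫⁻ z : E, ENNReal.ofReal (‖x - z‖ ^ (α - (d : ℝ)) * ‖z - y‖ ^ (β - (d : ℝ)))
    = ENNReal.ofReal (π ^ ((d:ℝ) / 2)) * (ENNReal.ofReal ((r ^ 2) ^ (-c) * Real.Gamma c)
        * ENNReal.ofReal (Real.Gamma (α / 2) * Real.Gamma (β / 2)
          / Real.Gamma (α / 2 + β / 2))) := by
    rw [e1, e2]
    calc (∫⁻ t in Ioi (0:ℝ), ∫⁻ u in Ioi (0:ℝ), ∫⁻ z : E, g t z * h u z)
        = ∫⁻ t in Ioi (0:ℝ), ∫⁻ u in Ioi (0:ℝ),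
            ENNReal.ofReal (π ^ ((d:ℝ) / 2)) * ENNReal.ofReal (φ t u) := by
          apply setLIntegral_congr_fun measurableSet_Ioi
          intro t ht
          exact setLIntegral_congr_fun measurableSet_Ioi
            (fun u hu => e3 t ht u hu)
      _ = ENNReal.ofReal (π ^ ((d:ℝ) / 2)) * ∫⁻ t in Ioi (0:ℝ), ∫⁻ u in Ioi (0:ℝ),
            ENNReal.ofReal (φ t u) := by
          rw [← lintegral_const_mul' _ _ ofReal_ne_top]
          exact lintegral_congr fun t => lintegral_const_mul' _ _ ofReal_ne_top
      _ = ENNReal.ofReal (π ^ ((d:ℝ) / 2)) * ∫⁻ t in Ioi (0:ℝ), ∫⁻ v in Ioi (0:ℝ),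
            ENNReal.ofReal (ψ v t) := by
          congr 1
          exact setLIntegral_congr_fun measurableSet_Ioi
            (fun t ht => e4 t ht)
      _ = ENNReal.ofReal (π ^ ((d:ℝ) / 2)) * ∫⁻ v in Ioi (0:ℝ), ∫⁻ t in Ioi (0:ℝ),
            ENNReal.ofReal (ψ v t) := by
          congr 1
          exact lintegral_lintegral_swap hψm.aemeasurable
      _ = ENNReal.ofReal (π ^ ((d:ℝ) / 2)) * ∫⁻ v in Ioi (0:ℝ),
            ENNReal.ofReal ((r ^ 2) ^ (-c) * Real.Gamma c)
              * ENNReal.ofReal (v ^ (α / 2 - 1) * (1 + v) ^ (-(α / 2 + β / 2))) := by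
          congr 1
          exact setLIntegral_congr_fun measurableSet_Ioi
            (fun v hv => e6 v hv)
      _ = ENNReal.ofReal (π ^ ((d:ℝ) / 2)) * (ENNReal.ofReal ((r ^ 2) ^ (-c) * Real.Gamma c)
            * ENNReal.ofReal (Real.Gamma (α / 2) * Real.Gamma (β / 2)
              / Real.Gamma (α / 2 + β / 2))) := by
          rw [lintegral_const_mul' _ _ ofReal_ne_top,
            lintegral_beta (half_pos hα) (half_pos hβ)]
  have hA0 : ENNReal.ofReal (Real.Gamma a) ≠ 0 := by
    simp [ENNReal.ofReal_eq_zero, not_le, hΓa]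
  have hB0 : ENNReal.ofReal (Real.Gamma b) ≠ 0 := by
    simp [ENNReal.ofReal_eq_zero, not_le, hΓb]
  apply ennreal_cancel (c := ENNReal.ofReal (Real.Gamma a) * ENNReal.ofReal (Real.Gamma b))
    (mul_ne_zero hA0 hB0) (ENNReal.mul_ne_top ofReal_ne_top ofReal_ne_top)
  rw [final, ← ENNReal.ofReal_mul hΓa.le, ← ENNReal.ofReal_mul (by positivity),
    ← ENNReal.ofReal_mul (by positivity), ← ENNReal.ofReal_mul (by positivity)]
  congr 1
  have hr2c : (r ^ 2) ^ (-c) = r ^ (α + β - (d:ℝ)) := by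
    rw [← Real.rpow_natCast r 2, ← Real.rpow_mul hr.le]
    congr 1
    push_cast
    rw [hc_def]; ring
  have h2ab : (α + β) / 2 = α / 2 + β / 2 := by ring
  rw [hr2c, kRiesz, ← ha_def, ← hb_def, ← hc_def, h2ab]
  field_simp


end RieszAux

end RieszAuxSection

set_option maxHeartbeats 1000000 in
/-- Composition formula for Riesz kernels. -/
theorem riesz_composition (d : ℕ) (hd : 1 ≤ d) (α β : ℝ)
    (hα : 0 < α) (hβ : 0 < β) (hαβ : α + β < d)
    (x y : EuclideanSpace ℝ (Fin d)) (hxy : x ≠ y) :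
    (∫ z : EuclideanSpace ℝ (Fin d), ‖x - z‖ ^ (α - (d : ℝ)) * ‖z - y‖ ^ (β - (d : ℝ)))
      = kRiesz α β d * ‖x - y‖ ^ (α + β - (d : ℝ)) := by
  have hfnn : 0 ≤ᵐ[(volume : MeasureTheory.Measure (EuclideanSpace ℝ (Fin d)))]
      fun z : EuclideanSpace ℝ (Fin d) => ‖x - z‖ ^ (α - (d:ℝ)) * ‖z - y‖ ^ (β - (d:ℝ)) :=
    Filter.Eventually.of_forall fun z =>
      mul_nonneg (Real.rpow_nonneg (norm_nonneg _) _) (Real.rpow_nonneg (norm_nonneg _) _)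
  have hfm : Measurable fun z : EuclideanSpace ℝ (Fin d) =>
      ‖x - z‖ ^ (α - (d:ℝ)) * ‖z - y‖ ^ (β - (d:ℝ)) :=
    ((measurable_const.sub measurable_id).norm.pow measurable_const).mul
      ((measurable_id.sub measurable_const).norm.pow measurable_const)
  have hk : 0 ≤ kRiesz α β d := by
    have h1 : 0 < Real.Gamma (α / 2) := Real.Gamma_pos_of_pos (by linarith)
    have h2 : 0 < Real.Gamma (β / 2) := Real.Gamma_pos_of_pos (by linarith)
    have h3 : 0 < Real.Gamma (((d:ℝ) - α - β) / 2) := Real.Gamma_pos_of_pos (by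
      have : α + β < (d:ℝ) := hαβ
      linarith)
    have h4 : 0 < Real.Gamma (((d:ℝ) - α) / 2) := Real.Gamma_pos_of_pos (by
      have : α + β < (d:ℝ) := hαβ
      linarith)
    have h5 : 0 < Real.Gamma (((d:ℝ) - β) / 2) := Real.Gamma_pos_of_pos (by
      have : α + β < (d:ℝ) := hαβ
      linarith)
    have h6 : 0 < Real.Gamma ((α + β) / 2) := Real.Gamma_pos_of_pos (by linarith)
    rw [kRiesz]
    have hπ : (0:ℝ) < π ^ ((d:ℝ)/2) := Real.rpow_pos_of_pos Real.pi_pos _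
    positivity
  rw [MeasureTheory.integral_eq_lintegral_of_nonneg_ae hfnn hfm.aestronglyMeasurable,
    RieszAux.main_lintegral hd hα hβ hαβ x y hxy,
    ENNReal.toReal_ofReal (mul_nonneg hk (Real.rpow_nonneg (norm_nonneg _) _))]
end

section
/- Let d ≥ 1 and n ≥ 2 be integers, let 1 ≤ k ≤ n−1, and let η = (η_1, …, η_n) ∈ (ℝ^d)^n with η_i ≠ 0 for all 1 ≤ i ≤ k. Then φ(η_1, …, η_n) ≤ min(1, Π_{i=1}^k ‖η_i‖^{−2}) · φ(η_{k+1}, …, η_n). -/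
open MeasureTheory Real Set ENNReal

section AuxLemmas

lemma oneDim {a : ℝ} (ha : 0 < a) :
    ∫ t in Set.Ioi (0:ℝ), Real.exp (-(t * a)) = a⁻¹ := by
  have h := Real.integral_rpow_mul_exp_neg_mul_Ioi zero_lt_one ha
  simp only [sub_self, Real.rpow_zero, one_mul, Real.Gamma_one, mul_one, one_div,
    Real.rpow_one] at h
  rw [← h]
  exact setIntegral_congr_fun measurableSet_Ioi (fun t _ => by rw [mul_comm])

lemma piLintegral (k : ℕ) (a : Fin k → ℝ) (ha : ∀ i, 0 < a i) :
    ∫⁻ u in Set.pi Set.univ (fun _ : Fin k => Set.Ioi (0:ℝ)),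
      ENNReal.ofReal (Real.exp (-∑ i, u i * a i)) = ENNReal.ofReal (∏ i, (a i)⁻¹) := by
  set gi : Fin k → ℝ → ℝ := fun i => (Set.Ioi (0:ℝ)).indicator (fun t => Real.exp (-(t * a i)))
    with hgi
  have hint : ∀ i, Integrable (gi i) := by
    intro i
    have h1 : IntegrableOn (fun t : ℝ => Real.exp (-(t * a i))) (Set.Ioi 0) := by
      have := exp_neg_integrableOn_Ioi 0 (ha i)
      refine this.congr_fun (fun t _ => by ring_nf) measurableSet_Ioi
    exact h1.integrable_indicator measurableSet_Ioi
  have hpi : MeasurableSet (Set.pi Set.univ (fun _ : Fin k => Set.Ioi (0:ℝ))) :=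
    MeasurableSet.univ_pi fun _ => measurableSet_Ioi
  have key : ∀ u : Fin k → ℝ,
      (Set.pi Set.univ (fun _ : Fin k => Set.Ioi (0:ℝ))).indicator
        (fun u => ENNReal.ofReal (Real.exp (-∑ i, u i * a i))) u
        = ENNReal.ofReal (∏ i, gi i (u i)) := by
    intro u
    by_cases hu : u ∈ Set.pi Set.univ (fun _ : Fin k => Set.Ioi (0:ℝ))
    · rw [Set.indicator_of_mem hu]
      congr 1
      rw [← Finset.sum_neg_distrib, Real.exp_sum]
      exact Finset.prod_congr rfl fun i _ =>
        (Set.indicator_of_mem (hu i (Set.mem_univ i))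
          (fun t => Real.exp (-(t * a i)))).symm
    · rw [Set.indicator_of_notMem hu]
      obtain ⟨i, hi⟩ := by simpa [Set.mem_pi] using hu
      have hz : ∏ i, gi i (u i) = 0 :=
        Finset.prod_eq_zero (Finset.mem_univ i)
          (Set.indicator_of_notMem (by simpa using hi) _)
      rw [hz, ENNReal.ofReal_zero]
  rw [← lintegral_indicator hpi]
  simp_rw [key]
  rw [← ofReal_integral_eq_lintegral_ofReal (μ := volume) (Integrable.fintype_prod hint)
    (Filter.Eventually.of_forall fun u => Finset.prod_nonneg fun i _ =>
      Set.indicator_nonneg (fun t _ => (Real.exp_pos _).le) _)]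
  congr 1
  rw [MeasureTheory.integral_fintype_prod_volume_eq_prod (ι := Fin k) gi]
  exact Finset.prod_congr rfl fun i _ => by
    rw [hgi]; simp only
    rw [integral_indicator measurableSet_Ioi, oneDim (ha i)]

lemma simplexMeas (N : ℕ) (t : ℝ) :
    MeasurableSet {w : Fin N → ℝ | (∀ i, 0 < w i) ∧ ∑ i, w i < t} := by
  have h1 : MeasurableSet {w : Fin N → ℝ | ∀ i, 0 < w i} := by
    have : {w : Fin N → ℝ | ∀ i, 0 < w i} = ⋂ i, {w | 0 < w i} := by ext w; simp
    rw [this]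
    exact MeasurableSet.iInter fun i =>
      measurableSet_lt measurable_const (measurable_pi_apply i)
  have h2 : MeasurableSet {w : Fin N → ℝ | ∑ i, w i < t} :=
    measurableSet_lt (Finset.univ.measurable_sum fun i _ => measurable_pi_apply i)
      measurable_const
  exact h1.inter h2

-- bound 1 : the set lintegral is at most 1
lemma bound1 (N : ℕ) (c : Fin N → ℝ) (hc : ∀ i, 0 ≤ c i) (t : ℝ) (ht : t ≤ 1) :
    ∫⁻ u in {u : Fin N → ℝ | (∀ i, 0 < u i) ∧ ∑ i, u i < t},
      ENNReal.ofReal (Real.exp (-∑ i, u i * c i)) ≤ 1 := by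
  calc ∫⁻ u in {u : Fin N → ℝ | (∀ i, 0 < u i) ∧ ∑ i, u i < t},
        ENNReal.ofReal (Real.exp (-∑ i, u i * c i))
      ≤ ∫⁻ _ in {u : Fin N → ℝ | (∀ i, 0 < u i) ∧ ∑ i, u i < t}, 1 := by
        refine setLIntegral_mono measurable_one fun u hu => ?_
        refine ENNReal.ofReal_le_one.mpr (Real.exp_le_one_iff.mpr ?_)
        simp only [neg_nonpos]
        exact Finset.sum_nonneg fun i _ => mul_nonneg (hu.1 i).le (hc i)
    _ = volume {u : Fin N → ℝ | (∀ i, 0 < u i) ∧ ∑ i, u i < t} := setLIntegral_one _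
    _ ≤ volume (Set.pi Set.univ (fun _ : Fin N => Set.Ioo (0:ℝ) 1)) := by
        refine measure_mono fun u hu => ?_
        intro i _
        refine ⟨hu.1 i, ?_⟩
        calc u i ≤ ∑ j, u j :=
              Finset.single_le_sum (fun j _ => (hu.1 j).le) (Finset.mem_univ i)
          _ < t := hu.2
          _ ≤ 1 := ht
    _ = 1 := by
        rw [volume_pi_pi]
        simp [Real.volume_Ioo]

-- conversion of the Bochner set integral to a lintegral
lemma phiEq (N : ℕ) (c : Fin N → ℝ) :
    ∫ w in {w : Fin N → ℝ | (∀ i, 0 < w i) ∧ ∑ i, w i < 1},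
        Real.exp (-∑ i, w i * c i)
      = (∫⁻ w in {w : Fin N → ℝ | (∀ i, 0 < w i) ∧ ∑ i, w i < 1},
        ENNReal.ofReal (Real.exp (-∑ i, w i * c i))).toReal := by
  refine integral_eq_lintegral_of_nonneg_ae
    (Filter.Eventually.of_forall fun w => (Real.exp_pos _).le) ?_
  exact (Measurable.aestronglyMeasurable (by fun_prop))

lemma keyLemma (k m : ℕ) (a : Fin k → ℝ) (b : Fin m → ℝ)
    (ha : ∀ i, 0 < a i) (hb : ∀ j, 0 ≤ b j) :
    ∫⁻ p in {p : (Fin k → ℝ) × (Fin m → ℝ) |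
        ((∀ i, 0 < p.1 i) ∧ ∀ j, 0 < p.2 j) ∧ (∑ i, p.1 i) + (∑ j, p.2 j) < 1},
      ENNReal.ofReal (Real.exp (-∑ i, p.1 i * a i)) *
        ENNReal.ofReal (Real.exp (-∑ j, p.2 j * b j))
      ≤ min 1 (ENNReal.ofReal (∏ i, (a i)⁻¹)) *
        ∫⁻ v in {v : Fin m → ℝ | (∀ j, 0 < v j) ∧ ∑ j, v j < 1},
          ENNReal.ofReal (Real.exp (-∑ j, v j * b j)) := by
  set g1 : (Fin k → ℝ) → ℝ≥0∞ :=
    fun u => ENNReal.ofReal (Real.exp (-∑ i, u i * a i)) with hg1def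
  set g2 : (Fin m → ℝ) → ℝ≥0∞ :=
    fun v => ENNReal.ofReal (Real.exp (-∑ j, v j * b j)) with hg2def
  set T : Set ((Fin k → ℝ) × (Fin m → ℝ)) :=
    {p | ((∀ i, 0 < p.1 i) ∧ ∀ j, 0 < p.2 j) ∧ (∑ i, p.1 i) + (∑ j, p.2 j) < 1} with hTdef
  set S' : Set (Fin m → ℝ) := {v | (∀ j, 0 < v j) ∧ ∑ j, v j < 1} with hS'def
  set M : ℝ≥0∞ := min 1 (ENNReal.ofReal (∏ i, (a i)⁻¹)) with hMdef
  have hg1m : Measurable g1 := by rw [hg1def]; fun_prop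
  have hg2m : Measurable g2 := by rw [hg2def]; fun_prop
  have hS'm : MeasurableSet S' := simplexMeas m 1
  have hTmeas : MeasurableSet T := by
    rw [hTdef]
    have h1 : MeasurableSet {p : (Fin k → ℝ) × (Fin m → ℝ) | ∀ i, 0 < p.1 i} := by
      have : {p : (Fin k → ℝ) × (Fin m → ℝ) | ∀ i, 0 < p.1 i}
          = ⋂ i, {p : (Fin k → ℝ) × (Fin m → ℝ) | 0 < p.1 i} := by ext p; simp
      rw [this]
      exact MeasurableSet.iInter fun i =>
        measurableSet_lt measurable_const (by fun_prop)
    have h2 : MeasurableSet {p : (Fin k → ℝ) × (Fin m → ℝ) | ∀ j, 0 < p.2 j} := by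
      have : {p : (Fin k → ℝ) × (Fin m → ℝ) | ∀ j, 0 < p.2 j}
          = ⋂ j, {p : (Fin k → ℝ) × (Fin m → ℝ) | 0 < p.2 j} := by ext p; simp
      rw [this]
      exact MeasurableSet.iInter fun j =>
        measurableSet_lt measurable_const (by fun_prop)
    have h3 : MeasurableSet
        {p : (Fin k → ℝ) × (Fin m → ℝ) | (∑ i, p.1 i) + (∑ j, p.2 j) < 1} :=
      measurableSet_lt (by fun_prop) measurable_const
    have : {p : (Fin k → ℝ) × (Fin m → ℝ) |
        ((∀ i, 0 < p.1 i) ∧ ∀ j, 0 < p.2 j) ∧ (∑ i, p.1 i) + (∑ j, p.2 j) < 1}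
        = ({p : (Fin k → ℝ) × (Fin m → ℝ) | ∀ i, 0 < p.1 i}
            ∩ {p | ∀ j, 0 < p.2 j}) ∩ {p | (∑ i, p.1 i) + (∑ j, p.2 j) < 1} := by
      ext p; simp [and_assoc]
    rw [this]
    exact (h1.inter h2).inter h3
  -- the inner bound
  have inner : ∀ v : Fin m → ℝ,
      (∫⁻ u, T.indicator (fun p => g1 p.1 * g2 p.2) (u, v)) ≤ M * S'.indicator g2 v := by
    intro v
    by_cases hv : (∀ j, 0 < v j) ∧ ∑ j, v j < 1
    · have hv0 : (0:ℝ) ≤ ∑ j, v j := Finset.sum_nonneg fun j _ => (hv.1 j).le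
      set Uv : Set (Fin k → ℝ) := {u | (∀ i, 0 < u i) ∧ ∑ i, u i < 1 - ∑ j, v j} with hUvdef
      have hUvm : MeasurableSet Uv := simplexMeas k _
      have hUb : ∫⁻ u in Uv, g1 u ≤ M := by
        refine le_min ?_ ?_
        · exact bound1 k a (fun i => (ha i).le) _ (by linarith)
        · refine le_trans (lintegral_mono_set ?_) (le_of_eq (piLintegral k a ha))
          intro u hu i _
          exact hu.1 i
      have hsl : ∀ u, T.indicator (fun p => g1 p.1 * g2 p.2) (u, v)
          = Uv.indicator g1 u * g2 v := by
        intro u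
        by_cases hu : u ∈ Uv
        · rw [Set.indicator_of_mem hu,
            Set.indicator_of_mem (show (u, v) ∈ T from
              ⟨⟨hu.1, hv.1⟩, by have := hu.2; simp only at this ⊢; linarith⟩)]
        · rw [Set.indicator_of_notMem hu, zero_mul,
            Set.indicator_of_notMem (fun hT' => hu ⟨hT'.1.1, by
              have := hT'.2; simp only at this ⊢; linarith⟩)]
      calc ∫⁻ u, T.indicator (fun p => g1 p.1 * g2 p.2) (u, v)
          = ∫⁻ u, Uv.indicator g1 u * g2 v := by simp_rw [hsl]
        _ = (∫⁻ u, Uv.indicator g1 u) * g2 v :=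
            lintegral_mul_const' _ _ ENNReal.ofReal_ne_top
        _ = (∫⁻ u in Uv, g1 u) * g2 v := by rw [lintegral_indicator hUvm]
        _ ≤ M * g2 v := mul_le_mul_left hUb _
        _ = M * S'.indicator g2 v := by rw [Set.indicator_of_mem (show v ∈ S' from hv)]
    · have hz : ∀ u : Fin k → ℝ, T.indicator (fun p => g1 p.1 * g2 p.2) (u, v) = 0 := by
        intro u
        refine Set.indicator_of_notMem ?_ _
        rintro ⟨⟨hu1, hv1⟩, hlt⟩
        refine hv ⟨hv1, ?_⟩
        have h0 : (0:ℝ) ≤ ∑ i, u i := Finset.sum_nonneg fun i _ => (hu1 i).le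
        simp only at hlt ⊢
        linarith
      simp_rw [hz]
      rw [lintegral_zero]
      exact zero_le
  calc ∫⁻ p in T, g1 p.1 * g2 p.2
      = ∫⁻ p, T.indicator (fun p => g1 p.1 * g2 p.2) p := (lintegral_indicator hTmeas _).symm
    _ = ∫⁻ v, ∫⁻ u, T.indicator (fun p => g1 p.1 * g2 p.2) (u, v) := by
        rw [Measure.volume_eq_prod, lintegral_prod_symm]
        exact (((hg1m.comp measurable_fst).mul (hg2m.comp measurable_snd)).indicator
          hTmeas).aemeasurable
    _ ≤ ∫⁻ v, M * S'.indicator g2 v := lintegral_mono inner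
    _ = M * ∫⁻ v, S'.indicator g2 v := lintegral_const_mul M (hg2m.indicator hS'm)
    _ = M * ∫⁻ v in S', g2 v := by rw [lintegral_indicator hS'm]

end AuxLemmas

/-- The function `φ(η₁,…,η_n) = ∫_{S_n} exp(-Σ w_i ‖η_i‖²) dw`, where
`S_n = {w : w_i > 0, Σ w_i < 1}`. -/
noncomputable def phiFn (d n : ℕ) (η : Fin n → EuclideanSpace ℝ (Fin d)) : ℝ :=
  ∫ w in {w : Fin n → ℝ | (∀ i, 0 < w i) ∧ ∑ i, w i < 1},
    Real.exp (-∑ i, w i * ‖η i‖ ^ 2)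

/-- `φ(η₁,…,η_n) ≤ min(1, ∏_{i=1}^k ‖η_i‖^{-2}) φ(η_{k+1},…,η_n)`, provided
`η₁,…,η_k` are nonzero. Here `η i` for `i : Fin n` corresponds to the
mathematical `η_{i+1}`. -/
theorem phiFn_le_tail (d n k : ℕ) (hd : 1 ≤ d) (hn : 2 ≤ n) (hk : 1 ≤ k) (hkn : k ≤ n - 1)
    (η : Fin n → EuclideanSpace ℝ (Fin d))
    (hη : ∀ i : Fin n, (i : ℕ) < k → η i ≠ 0) :
    phiFn d n η ≤
      min 1 (∏ i : Fin k, ‖η (Fin.castLE (by omega) i)‖ ^ (-2 : ℝ)) *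
        phiFn d (n - k) (fun j => η ⟨k + (j : ℕ), by have := j.isLt; omega⟩) := by
  have hkn' : k ≤ n := by omega
  simp only [phiFn]
  set m := n - k with hm
  have hkm : k + m = n := by omega
  -- the index equivalence
  set e : Fin k ⊕ Fin m ≃ Fin n := finSumFinEquiv.trans (finCongr hkm) with hedef
  have hinl : ∀ i : Fin k, e (Sum.inl i) = Fin.castLE hkn' i := fun i => rfl
  have hinr : ∀ j : Fin m,
      e (Sum.inr j) = (⟨k + (j : ℕ), by have := j.isLt; omega⟩ : Fin n) := fun j => rfl
  -- the measurable equivalence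
  set G : ((Fin k → ℝ) × (Fin m → ℝ)) ≃ᵐ (Fin n → ℝ) :=
    (MeasurableEquiv.sumPiEquivProdPi (fun _ : Fin k ⊕ Fin m => ℝ)).symm.trans
      (MeasurableEquiv.piCongrLeft (fun _ : Fin n => ℝ) e) with hGdef
  have hG : MeasurePreserving G volume volume :=
    (measurePreserving_piCongrLeft (fun _ : Fin n => (volume : Measure ℝ)) e).comp
      (measurePreserving_sumPiEquivProdPi_symm (fun _ : Fin k ⊕ Fin m => (volume : Measure ℝ)))
  have hG1 : ∀ (u : Fin k → ℝ) (v : Fin m → ℝ) (i : Fin k),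
      G (u, v) (e (Sum.inl i)) = u i :=
    fun u v i => Equiv.piCongrLeft_sumInl (fun _ => ℝ) e u v i
  have hG2 : ∀ (u : Fin k → ℝ) (v : Fin m → ℝ) (j : Fin m),
      G (u, v) (e (Sum.inr j)) = v j :=
    fun u v j => Equiv.piCongrLeft_sumInr (fun _ => ℝ) e u v j
  -- coefficients
  set a : Fin k → ℝ := fun i => ‖η (e (Sum.inl i))‖ ^ 2 with hadef
  set b : Fin m → ℝ := fun j => ‖η (e (Sum.inr j))‖ ^ 2 with hbdef
  have ha : ∀ i, 0 < a i := by
    intro i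
    have hne : η (e (Sum.inl i)) ≠ 0 := by
      refine hη _ ?_
      rw [hinl]
      exact i.isLt
    have := norm_pos_iff.mpr hne
    positivity
  have hb : ∀ j, 0 ≤ b j := fun j => by rw [hbdef]; positivity
  -- sums transform
  have hsum : ∀ (u : Fin k → ℝ) (v : Fin m → ℝ),
      ∑ i, G (u, v) i * ‖η i‖ ^ 2 = (∑ i, u i * a i) + (∑ j, v j * b j) := by
    intro u v
    rw [← Fintype.sum_equiv e (fun p => G (u, v) (e p) * ‖η (e p)‖ ^ 2)
      (fun i => G (u, v) i * ‖η i‖ ^ 2) (fun p => rfl), Fintype.sum_sum_type]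
    congr 1
    · exact Finset.sum_congr rfl fun i _ => by rw [hG1]
    · exact Finset.sum_congr rfl fun j _ => by rw [hG2]
  have hsum1 : ∀ (u : Fin k → ℝ) (v : Fin m → ℝ),
      ∑ i, G (u, v) i = (∑ i, u i) + (∑ j, v j) := by
    intro u v
    rw [← Fintype.sum_equiv e (fun p => G (u, v) (e p))
      (fun i => G (u, v) i) (fun p => rfl), Fintype.sum_sum_type]
    congr 1
    · exact Finset.sum_congr rfl fun i _ => hG1 u v i
    · exact Finset.sum_congr rfl fun j _ => hG2 u v j
  have hpos : ∀ (u : Fin k → ℝ) (v : Fin m → ℝ),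
      (∀ i, 0 < G (u, v) i) ↔ ((∀ i, 0 < u i) ∧ ∀ j, 0 < v j) := by
    intro u v
    constructor
    · intro h
      exact ⟨fun i => by rw [← hG1 u v i]; exact h _,
             fun j => by rw [← hG2 u v j]; exact h _⟩
    · rintro ⟨h1, h2⟩ i
      obtain ⟨p, rfl⟩ := e.surjective i
      cases p with
      | inl i => rw [hG1]; exact h1 i
      | inr j => rw [hG2]; exact h2 j
  -- the preimage of the simplex
  have hT : G ⁻¹' {w : Fin n → ℝ | (∀ i, 0 < w i) ∧ ∑ i, w i < 1}
      = {p : (Fin k → ℝ) × (Fin m → ℝ) |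
        ((∀ i, 0 < p.1 i) ∧ ∀ j, 0 < p.2 j) ∧ (∑ i, p.1 i) + (∑ j, p.2 j) < 1} := by
    ext ⟨u, v⟩
    simp only [Set.mem_preimage, Set.mem_setOf_eq, hsum1 u v, hpos u v]
  -- transport the head lintegral
  have htrans : (∫⁻ w in {w : Fin n → ℝ | (∀ i, 0 < w i) ∧ ∑ i, w i < 1},
        ENNReal.ofReal (Real.exp (-∑ i, w i * ‖η i‖ ^ 2)))
      = ∫⁻ p in {p : (Fin k → ℝ) × (Fin m → ℝ) |
          ((∀ i, 0 < p.1 i) ∧ ∀ j, 0 < p.2 j) ∧ (∑ i, p.1 i) + (∑ j, p.2 j) < 1},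
        ENNReal.ofReal (Real.exp (-∑ i, p.1 i * a i)) *
          ENNReal.ofReal (Real.exp (-∑ j, p.2 j * b j)) := by
    rw [← hG.setLIntegral_comp_preimage_emb (MeasurableEquiv.measurableEmbedding G), hT]
    refine lintegral_congr fun p => ?_
    obtain ⟨u, v⟩ := p
    rw [hsum u v, neg_add, Real.exp_add, ENNReal.ofReal_mul (Real.exp_pos _).le]
  have hkey := keyLemma k m a b ha hb
  have hLtail_le : (∫⁻ v in {v : Fin m → ℝ | (∀ j, 0 < v j) ∧ ∑ j, v j < 1},
      ENNReal.ofReal (Real.exp (-∑ j, v j * b j))) ≤ 1 := bound1 m b hb 1 le_rfl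
  set P' : ℝ := ∏ i : Fin k, (a i)⁻¹ with hP'def
  have hP'nonneg : 0 ≤ P' := Finset.prod_nonneg fun i _ => inv_nonneg.mpr (ha i).le
  have hMne : (min 1 (ENNReal.ofReal P') : ℝ≥0∞) ≠ ⊤ :=
    (lt_of_le_of_lt (min_le_left _ _) ENNReal.one_lt_top).ne
  have hMtoReal : (min 1 (ENNReal.ofReal P') : ℝ≥0∞).toReal = min 1 P' := by
    rw [ENNReal.toReal_min ENNReal.one_ne_top ENNReal.ofReal_ne_top, ENNReal.toReal_one,
      ENNReal.toReal_ofReal hP'nonneg]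
  have hProd : (∏ i : Fin k, ‖η (Fin.castLE (by omega : k ≤ n) i)‖ ^ (-2 : ℝ)) = P' := by
    rw [hP'def]
    refine Finset.prod_congr rfl fun i _ => ?_
    rw [show ((-2 : ℝ)) = -((2 : ℕ) : ℝ) by norm_num, Real.rpow_neg (norm_nonneg _),
      Real.rpow_natCast]
    rfl
  rw [phiEq n (fun i => ‖η i‖ ^ 2),
    phiEq m (fun j => ‖η ⟨k + (j : ℕ), by have := j.isLt; omega⟩‖ ^ 2), hProd]
  calc (∫⁻ w in {w : Fin n → ℝ | (∀ i, 0 < w i) ∧ ∑ i, w i < 1},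
        ENNReal.ofReal (Real.exp (-∑ i, w i * ‖η i‖ ^ 2))).toReal
      ≤ ((min 1 (ENNReal.ofReal P') : ℝ≥0∞) *
          ∫⁻ v in {v : Fin m → ℝ | (∀ j, 0 < v j) ∧ ∑ j, v j < 1},
            ENNReal.ofReal (Real.exp (-∑ j, v j * b j))).toReal := by
        rw [htrans]
        exact ENNReal.toReal_mono
          (ENNReal.mul_ne_top hMne (lt_of_le_of_lt hLtail_le ENNReal.one_lt_top).ne) hkey
    _ = min 1 P' * (∫⁻ v in {v : Fin m → ℝ | (∀ j, 0 < v j) ∧ ∑ j, v j < 1},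
          ENNReal.ofReal (Real.exp (-∑ j, v j * b j))).toReal := by
        rw [ENNReal.toReal_mul, hMtoReal]
end
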